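/- In the call-by-value restriction λμμ̃Q (where only values V ::= x | λ(x·α).c | inl V | inr V may be substituted for variables, and βμ fires on any coterm), the full η law for functions is unsound: combining the rule η→ (λ(x·α).⟨v ‖ x·α⟩ → v when x,α ∉ FV(v)) with the call-by-value β rules breaks confluence. Concretely, for commands c₀, c₁ and unused x, α, δ, the command ⟨λ(x·α).⟨μδ.c₀ ‖ x·α⟩ ‖ μ̃x.c₁⟩ reduces to c₁ by βμ̃-CBV and also reduces (via η→ followed by βμ-CBV) to c₀, where c₀ and c₁ may be chosen with no common reduct. -/
import Mathlib


/-!  The λμμ̃-calculus (Curien–Herbelin sequent calculus) with sums,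
     named (co)variables represented by natural numbers. -/

namespace LMM

mutual
  /-- Terms (producers). -/
  inductive Tm : Type
  | var : Nat → Tm                      -- x
  | mu  : Nat → Cmd → Tm                -- μα.c
  | lam : Nat → Nat → Cmd → Tm          -- λ(x·α).c
  | inl : Tm → Tm
  | inr : Tm → Tm

  /-- Coterms (consumers). -/
  inductive CoTm : Type
  | covar : Nat → CoTm                  -- α
  | mut : Nat → Cmd → CoTm              -- μ̃x.c
  | app : Tm → CoTm → CoTm              -- v·e
  | caseSum : Nat → Cmd → Nat → Cmd → CoTm  -- case{inl x ⇒ c₁ | inr y ⇒ c₂}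

  /-- Commands. -/
  inductive Cmd : Type
  | cut : Tm → CoTm → Cmd               -- ⟨v ‖ e⟩
end

mutual
  /-- Substitution of a term for a (term) variable in a term. -/
  def substVTm : Tm → Nat → Tm → Tm
  | .var y, x, v => if y = x then v else .var y
  | .mu a c, x, v => .mu a (substVCmd c x v)
  | .lam y a c, x, v => if y = x then .lam y a c else .lam y a (substVCmd c x v)
  | .inl t, x, v => .inl (substVTm t x v)
  | .inr t, x, v => .inr (substVTm t x v)

  def substVCo : CoTm → Nat → Tm → CoTm
  | .covar b, _, _ => .covar b
  | .mut y c, x, v => if y = x then .mut y c else .mut y (substVCmd c x v)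
  | .app t e, x, v => .app (substVTm t x v) (substVCo e x v)
  | .caseSum y c1 z c2, x, v =>
      .caseSum y (if y = x then c1 else substVCmd c1 x v)
               z (if z = x then c2 else substVCmd c2 x v)

  def substVCmd : Cmd → Nat → Tm → Cmd
  | .cut t e, x, v => .cut (substVTm t x v) (substVCo e x v)
end

mutual
  /-- Substitution of a coterm for a covariable in a term. -/
  def substETm : Tm → Nat → CoTm → Tm
  | .var y, _, _ => .var y
  | .mu b c, a, e => if b = a then .mu b c else .mu b (substECmd c a e)
  | .lam y b c, a, e => if b = a then .lam y b c else .lam y b (substECmd c a e)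
  | .inl t, a, e => .inl (substETm t a e)
  | .inr t, a, e => .inr (substETm t a e)

  def substECo : CoTm → Nat → CoTm → CoTm
  | .covar b, a, e => if b = a then e else .covar b
  | .mut y c, a, e => .mut y (substECmd c a e)
  | .app t e', a, e => .app (substETm t a e) (substECo e' a e)
  | .caseSum y c1 z c2, a, e => .caseSum y (substECmd c1 a e) z (substECmd c2 a e)

  def substECmd : Cmd → Nat → CoTm → Cmd
  | .cut t e', a, e => .cut (substETm t a e) (substECo e' a e)
end

mutual
  /-- Free (term) variables. -/
  def fvTm : Tm → List Nat
  | .var y => [y]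
  | .mu _ c => fvCmd c
  | .lam y _ c => (fvCmd c).filter (· ≠ y)
  | .inl t => fvTm t
  | .inr t => fvTm t

  def fvCo : CoTm → List Nat
  | .covar _ => []
  | .mut y c => (fvCmd c).filter (· ≠ y)
  | .app t e => fvTm t ++ fvCo e
  | .caseSum y c1 z c2 => (fvCmd c1).filter (· ≠ y) ++ (fvCmd c2).filter (· ≠ z)

  def fvCmd : Cmd → List Nat
  | .cut t e => fvTm t ++ fvCo e
end

mutual
  /-- Free covariables. -/
  def fcvTm : Tm → List Nat
  | .var _ => []
  | .mu b c => (fcvCmd c).filter (· ≠ b)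
  | .lam _ b c => (fcvCmd c).filter (· ≠ b)
  | .inl t => fcvTm t
  | .inr t => fcvTm t

  def fcvCo : CoTm → List Nat
  | .covar b => [b]
  | .mut _ c => fcvCmd c
  | .app t e => fcvTm t ++ fcvCo e
  | .caseSum _ c1 _ c2 => fcvCmd c1 ++ fcvCmd c2

  def fcvCmd : Cmd → List Nat
  | .cut t e => fcvTm t ++ fcvCo e
end

end LMM

namespace LMM

/-- Values of the call-by-value sub-calculus λμμ̃Q:
    V ::= x | λ(x·α).c | inl V | inr V. -/
inductive IsVal : Tm → Prop
| var (x : Nat) : IsVal (.var x)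
| lam (x a : Nat) (c : Cmd) : IsVal (.lam x a c)
| inl {v : Tm} : IsVal v → IsVal (.inl v)
| inr {v : Tm} : IsVal v → IsVal (.inr v)

/-- Reduction of the call-by-value calculus λμμ̃Q extended with the full η law
    for functions:
    * βμ-CBV:  ⟨μα.c ‖ e⟩ → c[e/α]   (any coterm e),
    * βμ̃-CBV:  ⟨V ‖ μ̃x.c⟩ → c[V/x]  (only for values V),
    * β→-CBV:  ⟨λ(x·α).c ‖ V·e⟩ → c[V/x][e/α],
    * β⊕-CBV,
    * η→: λ(x·α).⟨v ‖ x·α⟩ → v whenever x,α ∉ FV(v)  (applied here in a cut). -/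
inductive RedQ : Cmd → Cmd → Prop
| betaMu (a : Nat) (c : Cmd) (e : CoTm) :
    RedQ (.cut (.mu a c) e) (substECmd c a e)
| betaMut {v : Tm} (x : Nat) (c : Cmd) :
    IsVal v → RedQ (.cut v (.mut x c)) (substVCmd c x v)
| betaArrow {V : Tm} (x a : Nat) (c : Cmd) (e : CoTm) :
    IsVal V →
    RedQ (.cut (.lam x a c) (.app V e)) (substECmd (substVCmd c x V) a e)
| betaSumL {V : Tm} (x y : Nat) (c₁ c₂ : Cmd) :
    IsVal V → RedQ (.cut (.inl V) (.caseSum x c₁ y c₂)) (substVCmd c₁ x V)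
| betaSumR {V : Tm} (x y : Nat) (c₁ c₂ : Cmd) :
    IsVal V → RedQ (.cut (.inr V) (.caseSum x c₁ y c₂)) (substVCmd c₂ y V)
| etaArrow {v : Tm} (x a : Nat) (e : CoTm) :
    x ∉ fvTm v → a ∉ fcvTm v →
    RedQ (.cut (.lam x a (.cut v (.app (.var x) (.covar a)))) e) (.cut v e)

mutual
  theorem substVTm_id : ∀ (t : Tm) (x : Nat) (v : Tm), x ∉ fvTm t → substVTm t x v = t
  | .var y, x, v, h => by
      simp [fvTm] at h
      simp [substVTm, Ne.symm h]
  | .mu a c, x, v, h => by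
      simp only [fvTm] at h
      simp [substVTm, substVCmd_id c x v h]
  | .lam y a c, x, v, h => by
      by_cases hy : y = x
      · simp [substVTm, hy]
      · simp only [fvTm, List.mem_filter] at h
        have hc : x ∉ fvCmd c := fun hx => h ⟨hx, by simp [Ne.symm hy]⟩
        simp [substVTm, hy, substVCmd_id c x v hc]
  | .inl t, x, v, h => by
      simp only [fvTm] at h
      simp [substVTm, substVTm_id t x v h]
  | .inr t, x, v, h => by
      simp only [fvTm] at h
      simp [substVTm, substVTm_id t x v h]

  theorem substVCo_id : ∀ (e : CoTm) (x : Nat) (v : Tm), x ∉ fvCo e → substVCo e x v = e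
  | .covar b, x, v, _ => by simp [substVCo]
  | .mut y c, x, v, h => by
      by_cases hy : y = x
      · simp [substVCo, hy]
      · simp only [fvCo, List.mem_filter] at h
        have hc : x ∉ fvCmd c := fun hx => h ⟨hx, by simp [Ne.symm hy]⟩
        simp [substVCo, hy, substVCmd_id c x v hc]
  | .app t e, x, v, h => by
      simp only [fvCo, List.mem_append, not_or] at h
      simp [substVCo, substVTm_id t x v h.1, substVCo_id e x v h.2]
  | .caseSum y c1 z c2, x, v, h => by
      simp only [fvCo, List.mem_append, not_or, List.mem_filter] at h
      by_cases hy : y = x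
      · by_cases hz : z = x
        · simp [substVCo, hy, hz]
        · have hc2 : x ∉ fvCmd c2 := fun hx => h.2 ⟨hx, by simp [Ne.symm hz]⟩
          simp [substVCo, hy, hz, substVCmd_id c2 x v hc2]
      · have hc1 : x ∉ fvCmd c1 := fun hx => h.1 ⟨hx, by simp [Ne.symm hy]⟩
        by_cases hz : z = x
        · simp [substVCo, hy, hz, substVCmd_id c1 x v hc1]
        · have hc2 : x ∉ fvCmd c2 := fun hx => h.2 ⟨hx, by simp [Ne.symm hz]⟩
          simp [substVCo, hy, hz, substVCmd_id c1 x v hc1, substVCmd_id c2 x v hc2]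

  theorem substVCmd_id : ∀ (c : Cmd) (x : Nat) (v : Tm), x ∉ fvCmd c → substVCmd c x v = c
  | .cut t e, x, v, h => by
      simp only [fvCmd, List.mem_append, not_or] at h
      simp [substVCmd, substVTm_id t x v h.1, substVCo_id e x v h.2]
end

mutual
  theorem substETm_id : ∀ (t : Tm) (a : Nat) (e : CoTm), a ∉ fcvTm t → substETm t a e = t
  | .var y, a, e, _ => by simp [substETm]
  | .mu b c, a, e, h => by
      by_cases hb : b = a
      · simp [substETm, hb]
      · simp only [fcvTm, List.mem_filter] at h
        have hc : a ∉ fcvCmd c := fun hx => h ⟨hx, by simp [Ne.symm hb]⟩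
        simp [substETm, hb, substECmd_id c a e hc]
  | .lam y b c, a, e, h => by
      by_cases hb : b = a
      · simp [substETm, hb]
      · simp only [fcvTm, List.mem_filter] at h
        have hc : a ∉ fcvCmd c := fun hx => h ⟨hx, by simp [Ne.symm hb]⟩
        simp [substETm, hb, substECmd_id c a e hc]
  | .inl t, a, e, h => by
      simp only [fcvTm] at h
      simp [substETm, substETm_id t a e h]
  | .inr t, a, e, h => by
      simp only [fcvTm] at h
      simp [substETm, substETm_id t a e h]

  theorem substECo_id : ∀ (e' : CoTm) (a : Nat) (e : CoTm), a ∉ fcvCo e' → substECo e' a e = e'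
  | .covar b, a, e, h => by
      simp only [fcvCo, List.mem_singleton] at h
      simp [substECo, Ne.symm h]
  | .mut y c, a, e, h => by
      simp only [fcvCo] at h
      simp [substECo, substECmd_id c a e h]
  | .app t e', a, e, h => by
      simp only [fcvCo, List.mem_append, not_or] at h
      simp [substECo, substETm_id t a e h.1, substECo_id e' a e h.2]
  | .caseSum y c1 z c2, a, e, h => by
      simp only [fcvCo, List.mem_append, not_or] at h
      simp [substECo, substECmd_id c1 a e h.1, substECmd_id c2 a e h.2]

  theorem substECmd_id : ∀ (c : Cmd) (a : Nat) (e : CoTm), a ∉ fcvCmd c → substECmd c a e = c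
  | .cut t e', a, e, h => by
      simp only [fcvCmd, List.mem_append, not_or] at h
      simp [substECmd, substETm_id t a e h.1, substECo_id e' a e h.2]
end

theorem cutVarCovar_nf (n m : Nat) (c : Cmd) :
    ¬ RedQ (.cut (.var n) (.covar m)) c := by
  intro h; cases h

theorem cutVarCovar_rtg (n m : Nat) (c : Cmd) :
    Relation.ReflTransGen RedQ (.cut (.var n) (.covar m)) c →
    c = .cut (.var n) (.covar m) := by
  intro h
  rcases (Relation.ReflTransGen.cases_head h) with rfl | ⟨c', hstep, _⟩
  · rfl
  · exact absurd hstep (cutVarCovar_nf n m c')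

/-- in call-by-value λμμ̃Q the full η law for functions is
    unsound: for any commands c₀, c₁ with x, α, δ unused, the command
    ⟨λ(x·α).⟨μδ.c₀ ‖ x·α⟩ ‖ μ̃x.c₁⟩ reduces in one βμ̃-CBV step to c₁ and
    also reduces, via η→ followed by βμ-CBV, to c₀; moreover c₀ and c₁ can
    be chosen with no common reduct, so confluence fails. -/
theorem lmmQ_eta_arrow_unsound :
    (∀ (c₀ c₁ : Cmd) (x a d : Nat),
      x ∉ fvCmd c₀ → x ∉ fvCmd c₁ → a ∉ fcvCmd c₀ → d ∉ fcvCmd c₀ →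
      RedQ (.cut (.lam x a (.cut (.mu d c₀) (.app (.var x) (.covar a)))) (.mut x c₁)) c₁ ∧
      Relation.ReflTransGen RedQ
        (.cut (.lam x a (.cut (.mu d c₀) (.app (.var x) (.covar a)))) (.mut x c₁)) c₀) ∧
    (∃ (c₀ c₁ : Cmd) (x a d : Nat),
      x ∉ fvCmd c₀ ∧ x ∉ fvCmd c₁ ∧ a ∉ fcvCmd c₀ ∧ d ∉ fcvCmd c₀ ∧
      ¬ ∃ c' : Cmd, Relation.ReflTransGen RedQ c₀ c' ∧ Relation.ReflTransGen RedQ c₁ c') := by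
  constructor
  · intro c₀ c₁ x a d hx0 hx1 ha0 hd0
    constructor
    · have h := RedQ.betaMut (v := .lam x a (.cut (.mu d c₀) (.app (.var x) (.covar a))))
        x c₁ (IsVal.lam _ _ _)
      rwa [substVCmd_id c₁ x _ hx1] at h
    · have h1 : RedQ (.cut (.lam x a (.cut (.mu d c₀) (.app (.var x) (.covar a)))) (.mut x c₁))
          (.cut (.mu d c₀) (.mut x c₁)) := by
        apply RedQ.etaArrow
        · simpa [fvTm] using hx0
        · simp only [fcvTm, List.mem_filter, not_and]
          intro h _; exact absurd h ha0
      have h2 : RedQ (.cut (.mu d c₀) (.mut x c₁)) c₀ := by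
        have := RedQ.betaMu d c₀ (.mut x c₁)
        rwa [substECmd_id c₀ d _ hd0] at this
      exact Relation.ReflTransGen.head h1 (Relation.ReflTransGen.single h2)
  · refine ⟨.cut (.var 0) (.covar 0), .cut (.var 1) (.covar 1), 2, 2, 2, ?_, ?_, ?_, ?_, ?_⟩
    · simp [fvCmd, fvTm, fvCo]
    · simp [fvCmd, fvTm, fvCo]
    · simp [fcvCmd, fcvTm, fcvCo]
    · simp [fcvCmd, fcvTm, fcvCo]
    · rintro ⟨c', h0, h1⟩
      have e0 := cutVarCovar_rtg 0 0 c' h0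
      have e1 := cutVarCovar_rtg 1 1 c' h1
      rw [e0] at e1
      exact absurd e1 (by simp)

end LMM
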